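/- For every real u > 0 with u ≠ 1, ∫₀^∞ x²/((x+1)³(xu+1)) dx = (u-1)^{-3} (log u - (u-1) + (u-1)²/2). -/

import Mathlib

open MeasureTheory Real

set_option maxHeartbeats 1000000 in
theorem modified_log_two (u : ℝ) (hu : 0 < u) (hu1 : u ≠ 1) :
    ∫ x in Set.Ioi (0:ℝ), x ^ 2 / ((x + 1) ^ 3 * (x * u + 1)) =
      (Real.log u - (u - 1) + (u - 1) ^ 2 / 2) / (u - 1) ^ 3 := by
  have hv : u - 1 ≠ 0 := sub_ne_zero.mpr hu1
  set A : ℝ := -1 / (u - 1) ^ 3 with hA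
  set B : ℝ := 1 / (u - 1) - 1 / (u - 1) ^ 2 with hB
  set F : ℝ → ℝ := fun x => A * Real.log (x + 1) - A * Real.log (x * u + 1)
      - B * (x + 1)⁻¹ + (1 / (u - 1)) / 2 * ((x + 1) ^ 2)⁻¹ with hF
  have key : ∫ x in Set.Ioi (0:ℝ), x ^ 2 / ((x + 1) ^ 3 * (x * u + 1)) =
      (Real.log u / (u - 1) ^ 3) - F 0 := by
    apply integral_Ioi_of_hasDerivAt_of_nonneg'
    · intro x hx
      have hx0 : (0:ℝ) ≤ x := hx
      have hx1 : (0:ℝ) < x + 1 := by linarith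
      have hxu : (0:ℝ) < x * u + 1 := by nlinarith
      have hx1' : x + 1 ≠ 0 := ne_of_gt hx1
      have hxu' : x * u + 1 ≠ 0 := ne_of_gt hxu
      have d1 : HasDerivAt (fun x : ℝ => Real.log (x + 1)) (1 / (x + 1)) x := by
        simpa using (((hasDerivAt_id x).add_const 1).log hx1')
      have d2 : HasDerivAt (fun x : ℝ => Real.log (x * u + 1)) (u / (x * u + 1)) x := by
        simpa using ((((hasDerivAt_id x).mul_const u).add_const 1).log hxu')
      have d3 : HasDerivAt (fun x : ℝ => (x + 1)⁻¹) (-1 / (x + 1) ^ 2) x := by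
        simpa [Pi.inv_def] using (((hasDerivAt_id x).add_const 1).inv hx1')
      have d4 : HasDerivAt (fun x : ℝ => ((x + 1) ^ 2)⁻¹)
          (-(2 * (x + 1)) / ((x + 1) ^ 2) ^ 2) x := by
        have := ((((hasDerivAt_id x).add_const 1)).pow 2).inv (pow_ne_zero 2 hx1')
        simpa [Pi.inv_def, Pi.pow_def] using this
      have hD : HasDerivAt F
          (A * (1 / (x + 1)) - A * (u / (x * u + 1)) - B * (-1 / (x + 1) ^ 2)
            + (1 / (u - 1)) / 2 * (-(2 * (x + 1)) / ((x + 1) ^ 2) ^ 2)) x :=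
        (((d1.const_mul A).sub (d2.const_mul A)).sub (d3.const_mul B)).add
          (d4.const_mul ((1 / (u - 1)) / 2))
      convert hD using 1
      rw [hA, hB]
      field_simp
      ring
    · intro x hx
      have hx0 : (0:ℝ) < x := hx
      positivity
    · have t1 : Filter.Tendsto (fun x : ℝ => (x + 1) / (x * u + 1)) Filter.atTop (nhds u⁻¹) := by
        have h : ∀ᶠ x : ℝ in Filter.atTop,
            (x + 1) / (x * u + 1) = (1 + x⁻¹) / (u + x⁻¹) := by
          filter_upwards [Filter.eventually_gt_atTop (0:ℝ)] with x hx
          have hx0 : x ≠ 0 := ne_of_gt hx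
          have h1 : x * u + 1 ≠ 0 := by positivity
          have h2 : u + x⁻¹ ≠ 0 := by positivity
          rw [div_eq_div_iff h1 h2]
          have hxx : x * x⁻¹ = 1 := mul_inv_cancel₀ hx0
          linear_combination (1 - u) * hxx
        rw [Filter.tendsto_congr' h]
        have : Filter.Tendsto (fun x : ℝ => (1 + x⁻¹) / (u + x⁻¹)) Filter.atTop
            (nhds ((1 + 0) / (u + 0))) := by
          apply Filter.Tendsto.div
          · exact tendsto_const_nhds.add tendsto_inv_atTop_zero
          · exact tendsto_const_nhds.add tendsto_inv_atTop_zero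
          · positivity
        simpa using this
      have t2 : Filter.Tendsto (fun x : ℝ => A * Real.log (x + 1) - A * Real.log (x * u + 1))
          Filter.atTop (nhds (A * Real.log u⁻¹)) := by
        have h : ∀ᶠ x : ℝ in Filter.atTop,
            A * Real.log ((x + 1) / (x * u + 1))
              = A * Real.log (x + 1) - A * Real.log (x * u + 1) := by
          filter_upwards [Filter.eventually_gt_atTop (0:ℝ)] with x hx
          have hx1 : x + 1 ≠ 0 := by positivity
          have hxu : x * u + 1 ≠ 0 := by positivity
          rw [Real.log_div hx1 hxu]; ring
        rw [← Filter.tendsto_congr' h]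
        exact ((Real.continuousAt_log (by positivity)).tendsto.comp t1).const_mul A
      have t3 : Filter.Tendsto (fun x : ℝ => B * (x + 1)⁻¹) Filter.atTop (nhds 0) := by
        simpa using (tendsto_inv_atTop_zero.comp (Filter.tendsto_atTop_add_const_right _ 1
          Filter.tendsto_id)).const_mul B
      have t4 : Filter.Tendsto (fun x : ℝ => (1 / (u - 1)) / 2 * ((x + 1) ^ 2)⁻¹)
          Filter.atTop (nhds 0) := by
        have h2 : Filter.Tendsto (fun x : ℝ => (x + 1) ^ 2) Filter.atTop Filter.atTop :=
          (Filter.tendsto_pow_atTop (by norm_num)).comp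
            (Filter.tendsto_atTop_add_const_right _ 1 Filter.tendsto_id)
        simpa using (tendsto_inv_atTop_zero.comp h2).const_mul ((1 / (u - 1)) / 2)
      have heq : A * Real.log u⁻¹ = Real.log u / (u - 1) ^ 3 := by
        rw [Real.log_inv, hA]; field_simp
      rw [← heq]
      have := (t2.sub t3).add t4
      simpa [hF] using this
  rw [key]
  have hF0 : F 0 = 1 / (u - 1) ^ 2 - 1 / (2 * (u - 1)) := by
    simp [hF, hB]
    field_simp
    ring
  rw [hF0]
  field_simp
  ring
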